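/- Let C be a coalgebra over a field k. Then: (a) the Nakayama functor N_C is the zero functor if and only if C*_ℓ^rat = 0; (b) N_C is exact if and only if C*_ℓ^rat is an injective right C-comodule; (c) N_C preserves the full subcategory of finite-dimensional right C-comodules if and only if C*_ℓ^rat is quasi-finite. -/

import Mathlib

/-!
Statement 1.  Let `C` be a coalgebra over a field `k`.  Then:
(a) the Nakayama functor `N_C` is the zero functor iff `C*_ℓ^rat = 0`;
(b) `N_C` is exact iff `C*_ℓ^rat` is an injective right `C`-comodule;
(c) `N_C` preserves the full subcategory of finite-dimensional right `C`-comodules iff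
    `C*_ℓ^rat` is quasi-finite.

Concrete realisations (over the coalgebra `(C, Δ, ε)`):
* right `C`-comodules are vector spaces with a coassociative counital coaction, and the
  left `C*`-action on them is `f ⇀ m = m₍₀₎ ⟨f, m₍₁₎⟩`;
* morphisms of right `C`-comodules are the coaction-compatible linear maps;
* `N_C M = C ⊗_{C*} M`, realised as the quotient of `C ⊗[k] M` by the balancing
  relations, with its induced action on morphisms;
* `N_C` is the zero functor iff every `N_C M` vanishes; `N_C` is exact iff it preserves
  short exact sequences of comodules; `N_C` preserves finite-dimensionality iff
  `N_C M` is finite dimensional whenever `M` is;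
* `C*_ℓ^rat = 0` iff every rational element of `C*` is zero;
* injectivity of the comodule `C*_ℓ^rat` is the extension property along monomorphisms
  of comodules, where (by fullness of comodules in `C*`-modules and maximality of the
  rational part) comodule maps into `C*_ℓ^rat` are exactly the `C*`-linear maps into
  `C*` with rational image;
* quasi-finiteness of `C*_ℓ^rat` means `Hom^C(X, C*_ℓ^rat)` is finite dimensional for
  every finite-dimensional comodule `X`.
-/

open TensorProduct

universe u

namespace Stmt1

variable {k : Type u} [Field k]

section Framework

variable {C : Type u} [AddCommGroup C] [Module k C]

/-- A right comodule structure over the coalgebra `(C, Δ, ε)`. -/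
structure ComodStr (Δ : C →ₗ[k] C ⊗[k] C) (ε : C →ₗ[k] k)
    (M : Type u) [AddCommGroup M] [Module k M] where
  ρ : M →ₗ[k] M ⊗[k] C
  coassoc : (TensorProduct.assoc k M C C).toLinearMap ∘ₗ
      (TensorProduct.map ρ LinearMap.id) ∘ₗ ρ = (TensorProduct.map LinearMap.id Δ) ∘ₗ ρ
  counit : (TensorProduct.rid k M).toLinearMap ∘ₗ
      (TensorProduct.map LinearMap.id ε) ∘ₗ ρ = LinearMap.id

variable (Δ : C →ₗ[k] C ⊗[k] C) (ε : C →ₗ[k] k)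

/-- The convolution product on `C* = (C →ₗ[k] k)`. -/
noncomputable def conv (f g : (C →ₗ[k] k)) : (C →ₗ[k] k) :=
  (TensorProduct.lid k k).toLinearMap ∘ₗ (TensorProduct.map f g) ∘ₗ Δ


theorem conv_add_right (f g₁ g₂ : (C →ₗ[k] k)) :
    conv Δ f (g₁ + g₂) = conv Δ f g₁ + conv Δ f g₂ := by
  simp [conv, TensorProduct.map_add_right, LinearMap.comp_add, LinearMap.add_comp]

theorem conv_smul_right (a : k) (f g : (C →ₗ[k] k)) :
    conv Δ f (a • g) = a • conv Δ f g := by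
  simp [conv, TensorProduct.map_smul_right, LinearMap.comp_smul, LinearMap.smul_comp]

theorem conv_zero_right (f : (C →ₗ[k] k)) : conv Δ f 0 = 0 := by
  have : TensorProduct.map f (0 : (C →ₗ[k] k)) = 0 := by ext x y; simp
  simp [conv, this]

/-- The left action of `C*` on a right `C`-comodule: `f ⇀ m = m₍₀₎ ⟨f, m₍₁₎⟩`. -/
noncomputable def lAct {M : Type u} [AddCommGroup M] [Module k M]
    {ε : C →ₗ[k] k} (s : ComodStr Δ ε M) (f : (C →ₗ[k] k)) : M →ₗ[k] M :=
  (TensorProduct.rid k M).toLinearMap ∘ₗ (TensorProduct.map LinearMap.id f) ∘ₗ s.ρ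

/-- The right action of `C*` on `C` itself: `c ↼ f = ⟨f, c₍₁₎⟩ c₍₂₎`. -/
noncomputable def rAct (f : (C →ₗ[k] k)) : C →ₗ[k] C :=
  (TensorProduct.lid k C).toLinearMap ∘ₗ (TensorProduct.map f LinearMap.id) ∘ₗ Δ

/-- Morphisms of right `C`-comodules. -/
def IsComodHom {M N : Type u} [AddCommGroup M] [Module k M] [AddCommGroup N] [Module k N]
    (s : ComodStr Δ ε M) (t : ComodStr Δ ε N) (φ : M →ₗ[k] N) : Prop :=
  (TensorProduct.map φ LinearMap.id) ∘ₗ s.ρ = t.ρ ∘ₗ φ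

variable {M : Type u} [AddCommGroup M] [Module k M]

/-- The balancing relations defining `C ⊗_{C*} M` inside `C ⊗[k] M`. -/
noncomputable def relators (s : ComodStr Δ ε M) : Submodule k (C ⊗[k] M) :=
  Submodule.span k {x | ∃ (f : (C →ₗ[k] k)) (c : C) (m : M),
    x = (rAct Δ f c) ⊗ₜ[k] m - c ⊗ₜ[k] (lAct Δ s f m)}

/-- The Nakayama functor on objects: `N_C M = C ⊗_{C*} M`. -/
noncomputable def Nak (s : ComodStr Δ ε M) : Type u :=
  (C ⊗[k] M) ⧸ relators Δ ε s

noncomputable instance (s : ComodStr Δ ε M) : AddCommGroup (Nak Δ ε s) :=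
  inferInstanceAs (AddCommGroup ((C ⊗[k] M) ⧸ relators Δ ε s))

noncomputable instance (s : ComodStr Δ ε M) : Module k (Nak Δ ε s) :=
  inferInstanceAs (Module k ((C ⊗[k] M) ⧸ relators Δ ε s))

/-- A comodule morphism is `C*`-equivariant. -/
theorem equivariant_of_isComodHom
    {N : Type u} [AddCommGroup N] [Module k N]
    {s : ComodStr Δ ε M} {t : ComodStr Δ ε N} {φ : M →ₗ[k] N}
    (hφ : IsComodHom Δ ε s t φ) (f : (C →ₗ[k] k)) (m : M) :
    φ (lAct Δ s f m) = lAct Δ t f (φ m) := by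
  have h1 : ((TensorProduct.rid k N).toLinearMap ∘ₗ (TensorProduct.map LinearMap.id f)) ∘ₗ
      (TensorProduct.map φ (LinearMap.id (M := C))) =
      φ ∘ₗ ((TensorProduct.rid k M).toLinearMap ∘ₗ (TensorProduct.map LinearMap.id f)) := by
    apply TensorProduct.ext'
    intro x c
    simp
  have h2 := congrArg (fun (g : M →ₗ[k] N ⊗[k] C) =>
      ((TensorProduct.rid k N).toLinearMap ∘ₗ (TensorProduct.map LinearMap.id f)) ∘ₗ g) hφ
  simp only [← LinearMap.comp_assoc] at h2
  rw [h1] at h2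
  have := congrArg (fun g : M →ₗ[k] N => g m) h2
  simpa [lAct, LinearMap.comp_assoc] using this

/-- The map induced by a comodule morphism on Nakayama functors. -/
noncomputable def nakMap {N : Type u} [AddCommGroup N] [Module k N]
    {s : ComodStr Δ ε M} {t : ComodStr Δ ε N} (φ : M →ₗ[k] N)
    (hφ : IsComodHom Δ ε s t φ) : Nak Δ ε s →ₗ[k] Nak Δ ε t :=
  Submodule.mapQ (relators Δ ε s) (relators Δ ε t)
    (TensorProduct.map LinearMap.id φ)
    (by
      rw [relators, Submodule.span_le]
      rintro x ⟨f, c, m, rfl⟩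
      have : (TensorProduct.map (LinearMap.id (M := C)) φ)
          ((rAct Δ f c) ⊗ₜ[k] m - c ⊗ₜ[k] (lAct Δ s f m)) =
          (rAct Δ f c) ⊗ₜ[k] (φ m) - c ⊗ₜ[k] (lAct Δ t f (φ m)) := by
        simp [map_sub, equivariant_of_isComodHom Δ ε hφ f m]
      simp only [SetLike.mem_coe, Submodule.mem_comap, this]
      exact Submodule.subset_span ⟨f, c, φ m, rfl⟩)

/-- Rational elements of `C*` (for the left regular `C*`-module structure). -/
def IsRational (f : (C →ₗ[k] k)) : Prop :=
  ∃ (n : ℕ) (g : Fin n → (C →ₗ[k] k)) (c : Fin n → C),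
    ∀ h : (C →ₗ[k] k), conv Δ h f = ∑ i, h (c i) • g i


/-- `Hom^C(M, C*_ℓ^rat)`: comodule maps from `M` to the rational part of `C*`,
realised as left `C*`-module maps `M → C*` with rational image. -/
noncomputable def RatHom {M : Type u} [AddCommGroup M] [Module k M]
    (s : ComodStr Δ ε M) : Submodule k (M →ₗ[k] (C →ₗ[k] k)) where
  carrier := {φ | (∀ (f : (C →ₗ[k] k)) (m : M), φ (lAct Δ s f m) = conv Δ f (φ m)) ∧
      ∀ m : M, IsRational Δ (φ m)}
  add_mem' := by
    rintro φ ψ ⟨hφ, hφr⟩ ⟨hψ, hψr⟩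
    refine ⟨fun f m => by simp only [LinearMap.add_apply, hφ f m, hψ f m, conv_add_right],
      fun m => ?_⟩
    obtain ⟨n₁, g₁, c₁, h₁⟩ := hφr m
    obtain ⟨n₂, g₂, c₂, h₂⟩ := hψr m
    refine ⟨n₁ + n₂, Fin.append g₁ g₂, Fin.append c₁ c₂, fun h => ?_⟩
    rw [LinearMap.add_apply, conv_add_right, h₁ h, h₂ h, Fin.sum_univ_add]
    simp [Fin.append_left, Fin.append_right]
  zero_mem' := by
    refine ⟨fun f m => by simp [conv_zero_right], fun m => ?_⟩
    exact ⟨0, ![], ![], fun h => by simp [conv_zero_right]⟩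
  smul_mem' := by
    rintro a φ ⟨hφ, hφr⟩
    refine ⟨fun f m => by simp only [LinearMap.smul_apply, hφ f m, conv_smul_right], fun m => ?_⟩
    obtain ⟨n, g, c, hg⟩ := hφr m
    refine ⟨n, fun i => a • g i, c, fun h' => ?_⟩
    rw [LinearMap.smul_apply, conv_smul_right, hg h', Finset.smul_sum]
    refine Finset.sum_congr rfl fun i _ => ?_
    rw [smul_comm]

/-- `N_C` is the zero functor. -/
def NakayamaZero : Prop :=
  ∀ (M : Type u) [AddCommGroup M] [Module k M] (s : ComodStr Δ ε M)
    (x : Nak Δ ε s), x = 0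

/-- `N_C` is an exact functor: it preserves short exact sequences of comodules. -/
def NakayamaExact : Prop :=
  ∀ (M₁ M₂ M₃ : Type u) [AddCommGroup M₁] [Module k M₁] [AddCommGroup M₂] [Module k M₂]
    [AddCommGroup M₃] [Module k M₃]
    (s₁ : ComodStr Δ ε M₁) (s₂ : ComodStr Δ ε M₂) (s₃ : ComodStr Δ ε M₃)
    (φ : M₁ →ₗ[k] M₂) (ψ : M₂ →ₗ[k] M₃)
    (hφ : IsComodHom Δ ε s₁ s₂ φ) (hψ : IsComodHom Δ ε s₂ s₃ ψ),
    Function.Injective φ → Function.Surjective ψ → Function.Exact φ ψ →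
      Function.Injective (nakMap Δ ε φ hφ) ∧ Function.Surjective (nakMap Δ ε ψ hψ) ∧
        Function.Exact (nakMap Δ ε φ hφ) (nakMap Δ ε ψ hψ)

/-- `N_C` preserves the subcategory of finite-dimensional comodules. -/
def NakayamaPreservesFd : Prop :=
  ∀ (M : Type u) [AddCommGroup M] [Module k M] (s : ComodStr Δ ε M),
    FiniteDimensional k M → FiniteDimensional k (Nak Δ ε s)

/-- `C*_ℓ^rat = 0`. -/
def RatPartZero : Prop :=
  ∀ f : (C →ₗ[k] k), IsRational Δ f → f = 0

/-- `C*_ℓ^rat` is an injective right `C`-comodule: every comodule map `X → C*_ℓ^rat`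
extends along every monomorphism `X → Y` of right `C`-comodules.  (Comodule maps into
`C*_ℓ^rat` are exactly the `C*`-linear maps into `C*` with rational image.) -/
def RatPartInjective : Prop :=
  ∀ (X Y : Type u) [AddCommGroup X] [Module k X] [AddCommGroup Y] [Module k Y]
    (sX : ComodStr Δ ε X) (sY : ComodStr Δ ε Y) (i : X →ₗ[k] Y),
    IsComodHom Δ ε sX sY i → Function.Injective i →
    ∀ α : X →ₗ[k] (C →ₗ[k] k),
      (∀ (f : (C →ₗ[k] k)) (x : X), α (lAct Δ sX f x) = conv Δ f (α x)) →
      (∀ x : X, IsRational Δ (α x)) →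
      ∃ β : Y →ₗ[k] (C →ₗ[k] k),
        (∀ (f : (C →ₗ[k] k)) (y : Y), β (lAct Δ sY f y) = conv Δ f (β y)) ∧
        (∀ y : Y, IsRational Δ (β y)) ∧ β ∘ₗ i = α

/-- `C*_ℓ^rat` is quasi-finite: `Hom^C(X, C*_ℓ^rat)` is finite dimensional for every
finite-dimensional right `C`-comodule `X`. -/
def RatPartQuasiFinite : Prop :=
  ∀ (X : Type u) [AddCommGroup X] [Module k X], FiniteDimensional k X →
    ∀ (sX : ComodStr Δ ε X),
    @FiniteDimensional k (RatHom Δ ε sX) _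
      (Submodule.addCommGroup (R := k) (M := X →ₗ[k] (C →ₗ[k] k)) _) _

end Framework

section Aux

variable {C : Type u} [AddCommGroup C] [Module k C]

/-! ### Generic contraction maps -/

/-- Contraction of the right tensor factor with a functional. -/
noncomputable def ctr {M W : Type u} [AddCommGroup M] [Module k M]
    [AddCommGroup W] [Module k W] (h : W →ₗ[k] k) : M ⊗[k] W →ₗ[k] M :=
  (TensorProduct.rid k M).toLinearMap ∘ₗ TensorProduct.map LinearMap.id h

/-- Contraction of the left tensor factor with a functional. -/
noncomputable def ctl {M W : Type u} [AddCommGroup M] [Module k M]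
    [AddCommGroup W] [Module k W] (h : W →ₗ[k] k) : W ⊗[k] M →ₗ[k] M :=
  (TensorProduct.lid k M).toLinearMap ∘ₗ TensorProduct.map h LinearMap.id

variable {M N W V : Type u} [AddCommGroup M] [Module k M] [AddCommGroup N] [Module k N]
  [AddCommGroup W] [Module k W] [AddCommGroup V] [Module k V]

@[simp] theorem ctr_tmul (h : W →ₗ[k] k) (m : M) (w : W) :
    ctr h (m ⊗ₜ[k] w) = h w • m := by
  simp [ctr]

@[simp] theorem ctl_tmul (h : W →ₗ[k] k) (m : M) (w : W) :
    ctl h (w ⊗ₜ[k] m) = h w • m := by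
  simp [ctl]

theorem ctr_natural (h : W →ₗ[k] k) (φ : M →ₗ[k] N) :
    (ctr h) ∘ₗ (LinearMap.rTensor W φ) = φ ∘ₗ (ctr h : M ⊗[k] W →ₗ[k] M) := by
  apply TensorProduct.ext'
  intro m w
  simp [LinearMap.rTensor_tmul]

theorem ctr_natural_apply (h : W →ₗ[k] k) (φ : M →ₗ[k] N) (x : M ⊗[k] W) :
    ctr h (LinearMap.rTensor W φ x) = φ (ctr h x) :=
  LinearMap.congr_fun (ctr_natural h φ) x

theorem ctr_comp (h : W →ₗ[k] k) (g : V →ₗ[k] W) :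
    (ctr h) ∘ₗ (LinearMap.lTensor M g) = (ctr (h ∘ₗ g) : M ⊗[k] V →ₗ[k] M) := by
  apply TensorProduct.ext'
  intro m v
  simp [LinearMap.lTensor_tmul]

theorem ctl_natural (h : W →ₗ[k] k) (φ : M →ₗ[k] N) :
    φ ∘ₗ (ctl h : W ⊗[k] M →ₗ[k] M) = (ctl h) ∘ₗ (LinearMap.lTensor W φ) := by
  apply TensorProduct.ext'
  intro w m
  simp [LinearMap.lTensor_tmul]

theorem ctl_comp (h : W →ₗ[k] k) (g : V →ₗ[k] W) :
    (ctl h) ∘ₗ (LinearMap.rTensor M g) = (ctl (h ∘ₗ g) : V ⊗[k] M →ₗ[k] M) := by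
  apply TensorProduct.ext'
  intro v m
  simp [LinearMap.rTensor_tmul]

theorem ctl_ctl_assoc (a b : W →ₗ[k] k) :
    (ctl b) ∘ₗ (ctl a) ∘ₗ (TensorProduct.assoc k W W M).toLinearMap =
      (ctl ((TensorProduct.lid k k).toLinearMap ∘ₗ TensorProduct.map a b) :
        (W ⊗[k] W) ⊗[k] M →ₗ[k] M) := by
  apply TensorProduct.ext_threefold
  intro x y z
  simp [smul_smul, mul_comm]

end Aux

section ConvAlg

variable {C : Type u} [AddCommGroup C] [Module k C] [Coalgebra k C]

local notation "Cδ" => (CoalgebraStruct.comul : C →ₗ[k] C ⊗[k] C)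
local notation "Cε" => (CoalgebraStruct.counit : C →ₗ[k] k)

theorem rAct_eq (h : C →ₗ[k] k) : rAct Cδ h = (ctl h) ∘ₗ Cδ := rfl

theorem conv_eq_comp_rAct (h g : C →ₗ[k] k) : conv Cδ h g = g ∘ₗ rAct Cδ h := by
  have H : (TensorProduct.lid k k).toLinearMap ∘ₗ TensorProduct.map h g =
      g ∘ₗ (ctl h : C ⊗[k] C →ₗ[k] C) := by
    apply TensorProduct.ext'
    intro x y
    simp
  rw [conv, ← LinearMap.comp_assoc, H, rAct_eq, LinearMap.comp_assoc]

theorem conv_apply_rAct (h g : C →ₗ[k] k) (c : C) : conv Cδ h g c = g (rAct Cδ h c) := by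
  rw [conv_eq_comp_rAct]; rfl

theorem conv_eq_comp_ctr (h g : C →ₗ[k] k) :
    conv Cδ h g = h ∘ₗ (ctr g : C ⊗[k] C →ₗ[k] C) ∘ₗ Cδ := by
  have H : (TensorProduct.lid k k).toLinearMap ∘ₗ TensorProduct.map h g =
      h ∘ₗ (ctr g : C ⊗[k] C →ₗ[k] C) := by
    apply TensorProduct.ext'
    intro x y
    simp [mul_comm]
  rw [conv, ← LinearMap.comp_assoc, H, LinearMap.comp_assoc]

theorem conv_apply_ctr (h g : C →ₗ[k] k) (c : C) :
    conv Cδ h g c = h (ctr g (Cδ c)) := by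
  rw [conv_eq_comp_ctr]; rfl

theorem rAct_conv (a b : C →ₗ[k] k) :
    rAct Cδ (conv Cδ a b) = (rAct Cδ b) ∘ₗ (rAct Cδ a) := by
  have h1 : Cδ ∘ₗ (ctl a : C ⊗[k] C →ₗ[k] C) =
      (ctl a) ∘ₗ (LinearMap.lTensor C Cδ) := ctl_natural a Cδ
  have hco : (LinearMap.lTensor C Cδ) ∘ₗ Cδ =
      (TensorProduct.assoc k C C C).toLinearMap ∘ₗ (LinearMap.rTensor C Cδ) ∘ₗ Cδ :=
    Coalgebra.coassoc.symm
  symm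
  calc (rAct Cδ b) ∘ₗ (rAct Cδ a)
      = (ctl b) ∘ₗ ((Cδ ∘ₗ (ctl a : C ⊗[k] C →ₗ[k] C)) ∘ₗ Cδ) := by
        rw [rAct_eq, rAct_eq, LinearMap.comp_assoc, ← LinearMap.comp_assoc Cδ]
    _ = (ctl b) ∘ₗ ((ctl a) ∘ₗ ((LinearMap.lTensor C Cδ) ∘ₗ Cδ)) := by
        rw [h1, LinearMap.comp_assoc]
    _ = ((ctl b) ∘ₗ (ctl a) ∘ₗ (TensorProduct.assoc k C C C).toLinearMap) ∘ₗ
          (LinearMap.rTensor C Cδ) ∘ₗ Cδ := by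
        rw [hco]; simp only [LinearMap.comp_assoc]
    _ = ((ctl ((TensorProduct.lid k k).toLinearMap ∘ₗ TensorProduct.map a b)) ∘ₗ
          (LinearMap.rTensor C Cδ)) ∘ₗ Cδ := by
        rw [ctl_ctl_assoc, LinearMap.comp_assoc]
    _ = (ctl (((TensorProduct.lid k k).toLinearMap ∘ₗ TensorProduct.map a b) ∘ₗ Cδ)) ∘ₗ Cδ := by
        rw [ctl_comp]
    _ = rAct Cδ (conv Cδ a b) := by
        rw [rAct_eq, conv, LinearMap.comp_assoc]

theorem conv_assoc (a b c : C →ₗ[k] k) :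
    conv Cδ a (conv Cδ b c) = conv Cδ (conv Cδ a b) c := by
  rw [conv_eq_comp_rAct, conv_eq_comp_rAct b c, conv_eq_comp_rAct (conv Cδ a b) c, rAct_conv,
    ← LinearMap.comp_assoc]

theorem rAct_counit : rAct Cδ Cε = LinearMap.id (M := C) := by
  apply LinearMap.ext
  intro c
  have h2 : (ctl Cε : C ⊗[k] C →ₗ[k] C) =
      (TensorProduct.lid k C).toLinearMap ∘ₗ LinearMap.rTensor C Cε := by
    apply TensorProduct.ext'; intro x y; simp [LinearMap.rTensor_tmul]
  rw [rAct_eq]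
  simp only [LinearMap.comp_apply, h2]
  rw [Coalgebra.rTensor_counit_comul]
  simp

theorem conv_counit_left (f : C →ₗ[k] k) : conv Cδ Cε f = f := by
  rw [conv_eq_comp_rAct, rAct_counit]
  rfl

end ConvAlg

section Finrepr

variable {C : Type u} [AddCommGroup C] [Module k C]
variable {M : Type u} [AddCommGroup M] [Module k M]

attribute [local instance] Classical.propDecidable

/-- A fixed basis of `C`. -/
noncomputable def bE : Module.Basis (Module.Basis.ofVectorSpaceIndex k C) k C := Module.Basis.ofVectorSpace k C

/-- The canonical identification of `M ⊗ C` with finitely supported families. -/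
noncomputable def eqF : M ⊗[k] C ≃ₗ[k] (Module.Basis.ofVectorSpaceIndex k C →₀ M) :=
  (TensorProduct.congr (LinearEquiv.refl k M) (bE (k := k) (C := C)).repr) ≪≫ₗ
    TensorProduct.finsuppScalarRight k k M (Module.Basis.ofVectorSpaceIndex k C)

theorem eqF_tmul_apply (m : M) (c : C) (i : Module.Basis.ofVectorSpaceIndex k C) :
    eqF (m ⊗ₜ[k] c) i = (bE (k := k) (C := C)).repr c i • m := by
  simp [eqF, TensorProduct.congr_tmul, TensorProduct.finsuppScalarRight_apply_tmul_apply]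

theorem eqF_apply (x : M ⊗[k] C) (i : Module.Basis.ofVectorSpaceIndex k C) :
    eqF x i = ctr ((bE (k := k) (C := C)).coord i) x := by
  induction x using TensorProduct.induction_on with
  | zero => simp
  | tmul m c => simp [eqF_tmul_apply, Module.Basis.coord_apply]
  | add x y hx hy => simp [map_add, hx, hy]

theorem ctr_sep {x : M ⊗[k] C} (hx : ∀ h : C →ₗ[k] k, ctr h x = 0) : x = 0 := by
  apply (eqF (k := k)).injective
  rw [map_zero]
  ext i
  rw [eqF_apply]
  simp [hx]

theorem eqF_tmul_basis (m : M) (i : Module.Basis.ofVectorSpaceIndex k C) :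
    eqF (m ⊗ₜ[k] (bE (k := k) (C := C)) i) = Finsupp.single i m := by
  ext j
  rw [eqF_tmul_apply, Module.Basis.repr_self]
  rw [Finsupp.single_apply, Finsupp.single_apply]
  by_cases h : i = j <;> simp [h]

theorem repr_sum (x : M ⊗[k] C) :
    x = (eqF x).sum fun i m => m ⊗ₜ[k] (bE (k := k) (C := C)) i := by
  apply (eqF (k := k)).injective
  rw [map_finsuppSum]
  simp_rw [eqF_tmul_basis]
  rw [Finsupp.sum_single]

theorem exists_fin_repr (x : M ⊗[k] C) :
    ∃ (n : ℕ) (m : Fin n → M) (c : Fin n → C), x = ∑ i, m i ⊗ₜ[k] c i := by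
  classical
  set l := eqF x with hl
  set s := l.support
  refine ⟨s.card, fun j => l ((s.equivFin).symm j), fun j => bE (k := k) (C := C) ((s.equivFin).symm j : s), ?_⟩
  have h1 : x = ∑ i ∈ s, l i ⊗ₜ[k] (bE (k := k) (C := C)) i := repr_sum x
  rw [h1]
  rw [← Finset.sum_attach s (fun i => l i ⊗ₜ[k] (bE (k := k) (C := C)) i)]
  rw [← Finset.univ_eq_attach]
  exact (Equiv.sum_comp (s.equivFin).symm
    (fun (a : s) => l ↑a ⊗ₜ[k] (bE (k := k) (C := C)) ↑a)).symm

theorem ctr_finsum (h : C →ₗ[k] k) {n : ℕ} (m : Fin n → M) (c : Fin n → C) :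
    ctr h (∑ i, m i ⊗ₜ[k] c i) = ∑ i, h (c i) • m i := by
  rw [map_sum]
  simp

end Finrepr

section RTensorInj

variable {M N : Type u} [AddCommGroup M] [Module k M] [AddCommGroup N] [Module k N]

theorem rTensor_injective' (W : Type u) [AddCommGroup W] [Module k W]
    {φ : M →ₗ[k] N} (hφ : Function.Injective φ) :
    Function.Injective (LinearMap.rTensor W φ) := by
  obtain ⟨g, hg⟩ := φ.exists_leftInverse_of_injective (LinearMap.ker_eq_bot.mpr hφ)
  have h2 : (LinearMap.rTensor W g) ∘ₗ (LinearMap.rTensor W φ) = LinearMap.id := by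
    rw [← LinearMap.rTensor_comp, hg, LinearMap.rTensor_id]
  intro x y hxy
  have := congrArg (LinearMap.rTensor W g) hxy
  rwa [← LinearMap.comp_apply, ← LinearMap.comp_apply, h2, LinearMap.id_apply,
    LinearMap.id_apply] at this

end RTensorInj

section RatComod

variable {C : Type u} [AddCommGroup C] [Module k C] [Coalgebra k C]

local notation "Cδ" => (CoalgebraStruct.comul : C →ₗ[k] C ⊗[k] C)
local notation "Cε" => (CoalgebraStruct.counit : C →ₗ[k] k)

theorem lAct_apply {M : Type u} [AddCommGroup M] [Module k M]
    (s : ComodStr Cδ Cε M) (h : C →ₗ[k] k) (m : M) :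
    lAct Cδ s h m = ctr h (s.ρ m) := rfl

theorem auto_rat {M : Type u} [AddCommGroup M] [Module k M]
    (s : ComodStr Cδ Cε M) (α : M →ₗ[k] (C →ₗ[k] k))
    (hα : ∀ (f : C →ₗ[k] k) (m : M), α (lAct Cδ s f m) = conv Cδ f (α m)) (m : M) :
    IsRational Cδ (α m) := by
  obtain ⟨n, mm, cc, hx⟩ := exists_fin_repr (s.ρ m)
  refine ⟨n, fun i => α (mm i), cc, fun h => ?_⟩
  rw [← hα h m, lAct_apply, hx, ctr_finsum, map_sum]
  simp

theorem conv_add_left (f₁ f₂ g : C →ₗ[k] k) :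
    conv Cδ (f₁ + f₂) g = conv Cδ f₁ g + conv Cδ f₂ g := by
  simp [conv, TensorProduct.map_add_left, LinearMap.comp_add, LinearMap.add_comp]

theorem conv_smul_left (a : k) (f g : C →ₗ[k] k) :
    conv Cδ (a • f) g = a • conv Cδ f g := by
  simp [conv, TensorProduct.map_smul_left, LinearMap.comp_smul, LinearMap.smul_comp]

/-- The rational part of `C*` as a submodule. -/
noncomputable def RatSub : Submodule k (C →ₗ[k] k) where
  carrier := {f | IsRational Cδ f}
  add_mem' := by
    rintro f g ⟨n₁, g₁, c₁, h₁⟩ ⟨n₂, g₂, c₂, h₂⟩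
    refine ⟨n₁ + n₂, Fin.append g₁ g₂, Fin.append c₁ c₂, fun h => ?_⟩
    rw [conv_add_right, h₁ h, h₂ h, Fin.sum_univ_add]
    simp [Fin.append_left, Fin.append_right]
  zero_mem' := ⟨0, ![], ![], fun h => by simp [conv_zero_right]⟩
  smul_mem' := by
    rintro a f ⟨n, g, c, hg⟩
    refine ⟨n, fun i => a • g i, c, fun h => ?_⟩
    rw [conv_smul_right, hg h, Finset.smul_sum]
    exact Finset.sum_congr rfl fun i _ => smul_comm _ _ _

theorem rat_conv (h : C →ₗ[k] k) {f : C →ₗ[k] k} (hf : IsRational Cδ f) :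
    IsRational Cδ (conv Cδ h f) := by
  obtain ⟨n, g, c, hc⟩ := hf
  refine ⟨n, g, fun i => ctr h (Cδ (c i)), fun h' => ?_⟩
  rw [conv_assoc, hc]
  exact Finset.sum_congr rfl fun i _ => by rw [conv_apply_ctr]

/-- The contraction, as a bilinear map. -/
noncomputable def ctrL (M : Type u) [AddCommGroup M] [Module k M]
    (W : Type u) [AddCommGroup W] [Module k W] :
    (W →ₗ[k] k) →ₗ[k] ((M ⊗[k] W) →ₗ[k] M) where
  toFun h := ctr h
  map_add' a b := by
    apply TensorProduct.ext'; intro m c; simp [add_smul]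
  map_smul' a h := by
    apply TensorProduct.ext'; intro m c; simp [smul_smul, smul_assoc]

noncomputable def PsiMap : ((C →ₗ[k] k) ⊗[k] C) →ₗ[k] ((C →ₗ[k] k) →ₗ[k] (C →ₗ[k] k)) :=
  (ctrL (C →ₗ[k] k) C).flip

theorem PsiMap_apply (x : (C →ₗ[k] k) ⊗[k] C) (h : C →ₗ[k] k) :
    PsiMap x h = ctr h x := rfl

theorem PsiMap_injective : Function.Injective (PsiMap (k := k) (C := C)) := by
  intro x y hxy
  have hs : ∀ h : C →ₗ[k] k, ctr h (x - y) = 0 := by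
    intro h
    rw [map_sub, ← PsiMap_apply, ← PsiMap_apply, hxy, sub_self]
  exact sub_eq_zero.mp (ctr_sep hs)

noncomputable def convBil : (C →ₗ[k] k) →ₗ[k] (C →ₗ[k] k) →ₗ[k] (C →ₗ[k] k) :=
  LinearMap.mk₂ k (conv Cδ) conv_add_left conv_smul_left
    (conv_add_right Cδ) (conv_smul_right Cδ)

theorem convBil_mem_range (f : RatSub (k := k) (C := C)) :
    (convBil.flip ∘ₗ (RatSub (k := k) (C := C)).subtype) f ∈ LinearMap.range PsiMap := by
  have hf : IsRational Cδ (f : C →ₗ[k] k) := f.2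
  obtain ⟨n, g, c, hc⟩ := hf
  refine ⟨∑ i, g i ⊗ₜ[k] c i, ?_⟩
  apply LinearMap.ext; intro h
  rw [PsiMap_apply, ctr_finsum]
  exact (hc h).symm

/-- The coaction of `C` on the rational part, valued in `C* ⊗ C`. -/
noncomputable def rho0 : (RatSub (k := k) (C := C)) →ₗ[k] ((C →ₗ[k] k) ⊗[k] C) :=
  (LinearEquiv.ofInjective PsiMap PsiMap_injective).symm.toLinearMap ∘ₗ
    LinearMap.codRestrict (LinearMap.range PsiMap)
      (convBil.flip ∘ₗ (RatSub (k := k) (C := C)).subtype) convBil_mem_range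

theorem rho0_spec (f : RatSub (k := k) (C := C)) (h : C →ₗ[k] k) :
    ctr h (rho0 f) = conv Cδ h ↑f := by
  have h2 := (LinearEquiv.ofInjective PsiMap PsiMap_injective).apply_symm_apply
    ((LinearMap.codRestrict (LinearMap.range PsiMap)
      (convBil.flip ∘ₗ (RatSub (k := k) (C := C)).subtype) convBil_mem_range) f)
  have h3 := congrArg Subtype.val h2
  rw [LinearEquiv.ofInjective_apply] at h3
  have h4 := LinearMap.congr_fun h3 h
  rw [PsiMap_apply] at h4
  exact h4

theorem rho0_comp_mem (f : RatSub (k := k) (C := C)) (i : Module.Basis.ofVectorSpaceIndex k C) :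
    eqF (rho0 f) i ∈ RatSub (k := k) (C := C) := by
  rw [eqF_apply, rho0_spec]
  exact rat_conv _ f.2

/-- The embedding `RatSub ⊗ C → C* ⊗ C`. -/
noncomputable def jmap : (RatSub (k := k) (C := C)) ⊗[k] C →ₗ[k] (C →ₗ[k] k) ⊗[k] C :=
  LinearMap.rTensor C (RatSub (k := k) (C := C)).subtype

theorem jmap_injective : Function.Injective (jmap (k := k) (C := C)) :=
  rTensor_injective' C (Submodule.injective_subtype _)

theorem rho0_mem_range (f : RatSub (k := k) (C := C)) :
    rho0 f ∈ LinearMap.range (jmap (k := k) (C := C)) := by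
  rw [repr_sum (rho0 f), Finsupp.sum]
  apply Submodule.sum_mem
  intro i _
  exact ⟨(⟨eqF (rho0 f) i, rho0_comp_mem f i⟩ : RatSub (k := k) (C := C)) ⊗ₜ[k]
    bE (k := k) (C := C) i, by simp [jmap, LinearMap.rTensor_tmul]⟩

/-- The coaction on the rational part. -/
noncomputable def rhoR : (RatSub (k := k) (C := C)) →ₗ[k] (RatSub (k := k) (C := C)) ⊗[k] C :=
  (LinearEquiv.ofInjective jmap jmap_injective).symm.toLinearMap ∘ₗ
    LinearMap.codRestrict (LinearMap.range jmap) rho0 rho0_mem_range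

theorem jmap_rhoR (f : RatSub (k := k) (C := C)) : jmap (rhoR f) = rho0 f := by
  have h2 := (LinearEquiv.ofInjective jmap jmap_injective).apply_symm_apply
    ((LinearMap.codRestrict (LinearMap.range jmap) rho0 rho0_mem_range) f)
  have h3 := congrArg Subtype.val h2
  rwa [LinearEquiv.ofInjective_apply] at h3

theorem coe_ctr (x : (RatSub (k := k) (C := C)) ⊗[k] C) (h : C →ₗ[k] k) :
    (↑(ctr (M := RatSub (k := k) (C := C)) h x) : C →ₗ[k] k) = ctr h (jmap x) :=
  by
  have := (ctr_natural_apply (M := RatSub (k := k) (C := C)) h (RatSub (k := k) (C := C)).subtype x)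
  exact this.symm

theorem ctr_rhoR (f : RatSub (k := k) (C := C)) (h : C →ₗ[k] k) :
    (↑(ctr (M := RatSub (k := k) (C := C)) h (rhoR f)) : C →ₗ[k] k) = conv Cδ h ↑f := by
  rw [coe_ctr, jmap_rhoR, rho0_spec]

theorem ctr_ctr_assoc_symm {M' : Type u} [AddCommGroup M'] [Module k M']
    (h h' : C →ₗ[k] k) (x : M' ⊗[k] C) :
    ctr h' (ctr h ((TensorProduct.assoc k M' C C).symm
      (TensorProduct.map LinearMap.id Cδ x))) = ctr (conv Cδ h' h) x := by
  have base : (ctr h') ∘ₗ (ctr h : (M' ⊗[k] C) ⊗[k] C →ₗ[k] M' ⊗[k] C) =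
      (ctr ((TensorProduct.lid k k).toLinearMap ∘ₗ TensorProduct.map h' h)) ∘ₗ
        (TensorProduct.assoc k M' C C).toLinearMap := by
    apply TensorProduct.ext_threefold
    intro m c c'
    simp [smul_smul, mul_comm]
  have hb := LinearMap.congr_fun base
    ((TensorProduct.assoc k M' C C).symm (TensorProduct.map LinearMap.id Cδ x))
  simp only [LinearMap.comp_apply, LinearEquiv.coe_coe, LinearEquiv.apply_symm_apply] at hb
  rw [hb]
  have hc : (ctr ((TensorProduct.lid k k).toLinearMap ∘ₗ TensorProduct.map h' h)) ∘ₗ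
      (LinearMap.lTensor M' Cδ) =
      (ctr (((TensorProduct.lid k k).toLinearMap ∘ₗ TensorProduct.map h' h) ∘ₗ Cδ) :
        M' ⊗[k] C →ₗ[k] M') := ctr_comp _ _
  have hd := LinearMap.congr_fun hc x
  simp only [LinearMap.comp_apply] at hd
  have he : LinearMap.lTensor M' Cδ x = TensorProduct.map LinearMap.id Cδ x := rfl
  rw [he] at hd
  rw [hd]
  rfl

set_option synthInstance.maxHeartbeats 400000 in
/-- The rational part of `C*` as a right `C`-comodule. -/
noncomputable def sRat : ComodStr Cδ Cε (RatSub (k := k) (C := C)) where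
  ρ := rhoR
  counit := by
    apply LinearMap.ext
    intro f
    show ctr Cε (rhoR f) = f
    apply Subtype.ext
    rw [coe_ctr, jmap_rhoR, rho0_spec, conv_counit_left]
  coassoc := by
    apply LinearMap.ext
    intro f
    refine rTensor_injective' (C ⊗[k] C) (M := RatSub (k := k) (C := C))
      (Submodule.injective_subtype (RatSub (k := k) (C := C))) ?_
    show LinearMap.rTensor (C ⊗[k] C) (RatSub (k := k) (C := C)).subtype
        ((TensorProduct.assoc k _ C C) (TensorProduct.map rhoR LinearMap.id (rhoR f))) =
      LinearMap.rTensor (C ⊗[k] C) (RatSub (k := k) (C := C)).subtype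
        (TensorProduct.map LinearMap.id Cδ (rhoR f))
    have sq1 : (LinearMap.rTensor (C ⊗[k] C) (RatSub (k := k) (C := C)).subtype) ∘ₗ
        (TensorProduct.map LinearMap.id Cδ) =
        (TensorProduct.map LinearMap.id Cδ) ∘ₗ jmap := by
      apply TensorProduct.ext'
      intro a c
      simp [jmap, LinearMap.rTensor_tmul]
    have sq2 : (LinearMap.rTensor (C ⊗[k] C) (RatSub (k := k) (C := C)).subtype) ∘ₗ
        (TensorProduct.assoc k (RatSub (k := k) (C := C)) C C).toLinearMap =
        (TensorProduct.assoc k (C →ₗ[k] k) C C).toLinearMap ∘ₗ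
          (LinearMap.rTensor C (jmap (k := k) (C := C))) := by
      apply TensorProduct.ext_threefold
      intro a c c'
      simp [jmap, LinearMap.rTensor_tmul]
    have sq3 : (LinearMap.rTensor C (jmap (k := k) (C := C))) ∘ₗ
        (TensorProduct.map rhoR LinearMap.id) =
        LinearMap.rTensor C (jmap ∘ₗ rhoR) := by
      apply TensorProduct.ext'
      intro a c
      simp [LinearMap.rTensor_tmul]
    have e1 := LinearMap.congr_fun sq2 (TensorProduct.map rhoR LinearMap.id (rhoR f))
    have e3 := LinearMap.congr_fun sq3 (rhoR f)
    have e2 := LinearMap.congr_fun sq1 (rhoR f)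
    simp only [LinearMap.comp_apply, LinearEquiv.coe_coe] at e1 e2 e3 ⊢
    rw [e1, e3, e2, jmap_rhoR]
    rw [← LinearEquiv.eq_symm_apply]
    apply (eqF (k := k) (M := (C →ₗ[k] k) ⊗[k] C)).injective
    ext i : 1
    rw [eqF_apply, eqF_apply]
    generalize (bE (k := k) (C := C)).coord i = h
    rw [← sub_eq_zero]
    apply ctr_sep
    intro h'
    rw [map_sub, sub_eq_zero]
    have c1 : ctr h (LinearMap.rTensor C (jmap ∘ₗ rhoR) (rhoR f)) =
        rho0 (ctr (M := RatSub (k := k) (C := C)) h (rhoR f)) := by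
      rw [ctr_natural_apply (M := RatSub (k := k) (C := C)) (N := (C →ₗ[k] k) ⊗[k] C) h (jmap ∘ₗ rhoR) (rhoR f), LinearMap.comp_apply, jmap_rhoR]
    rw [c1, rho0_spec, ctr_rhoR, ctr_ctr_assoc_symm, rho0_spec, conv_assoc]

theorem coe_lAct_sRat (h : C →ₗ[k] k) (f : RatSub (k := k) (C := C)) :
    (↑(lAct Cδ sRat h f) : C →ₗ[k] k) = conv Cδ h ↑f := by
  rw [lAct_apply]
  exact ctr_rhoR f h

end RatComod

section NakDual

variable {C : Type u} [AddCommGroup C] [Module k C] [Coalgebra k C]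

local notation "Cδ" => (CoalgebraStruct.comul : C →ₗ[k] C ⊗[k] C)
local notation "Cε" => (CoalgebraStruct.counit : C →ₗ[k] k)

/-- Evaluation pairing on `C ⊗ RatSub`. -/
noncomputable def phiRat : C ⊗[k] (RatSub (k := k) (C := C)) →ₗ[k] k :=
  TensorProduct.lift (LinearMap.mk₂ k (fun (c : C) (x : RatSub (k := k) (C := C)) =>
      (x : C →ₗ[k] k) c)
    (fun c c' x => by simp)
    (fun a c x => by simp)
    (fun c x y => by simp)
    (fun a c x => by simp))

theorem phiRat_tmul (c : C) (x : RatSub (k := k) (C := C)) :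
    phiRat (c ⊗ₜ[k] x) = (x : C →ₗ[k] k) c := rfl

theorem phiRat_relators {y : C ⊗[k] (RatSub (k := k) (C := C))}
    (hy : y ∈ relators Cδ Cε sRat) : phiRat y = 0 := by
  have hle : relators Cδ Cε sRat ≤ LinearMap.ker phiRat := by
    rw [relators, Submodule.span_le]
    rintro _ ⟨h, c, m, rfl⟩
    simp only [SetLike.mem_coe, LinearMap.mem_ker, map_sub]
    rw [phiRat_tmul, phiRat_tmul, coe_lAct_sRat, ← conv_apply_rAct, sub_self]
  exact hle hy

theorem ratzero_of_nakzero (H : NakayamaZero Cδ Cε) : RatPartZero Cδ := by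
  intro f hf
  have hNak := H (RatSub (k := k) (C := C)) sRat
  apply LinearMap.ext
  intro c
  have h0 : (Submodule.Quotient.mk (c ⊗ₜ[k] (⟨f, hf⟩ : RatSub (k := k) (C := C))) :
      Nak Cδ Cε sRat) = 0 := hNak _
  rw [Submodule.Quotient.mk_eq_zero] at h0
  have h1 := phiRat_relators h0
  rw [phiRat_tmul] at h1
  simpa using h1

variable {M N : Type u} [AddCommGroup M] [Module k M] [AddCommGroup N] [Module k N]

/-- The `C*`-linear map `M → C*` attached to a functional on `N_C M`. -/
noncomputable def toRatFun (s : ComodStr Cδ Cε M) (D : Module.Dual k (Nak Cδ Cε s)) :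
    M →ₗ[k] (C →ₗ[k] k) :=
  (TensorProduct.curry (D ∘ₗ (relators Cδ Cε s).mkQ)).flip

theorem toRatFun_apply (s : ComodStr Cδ Cε M) (D : Module.Dual k (Nak Cδ Cε s))
    (m : M) (c : C) :
    toRatFun s D m c = D (Submodule.Quotient.mk (c ⊗ₜ[k] m)) := rfl

theorem mk_rel (s : ComodStr Cδ Cε M) (h : C →ₗ[k] k) (c : C) (m : M) :
    (Submodule.Quotient.mk (rAct Cδ h c ⊗ₜ[k] m) : Nak Cδ Cε s) =
      Submodule.Quotient.mk (c ⊗ₜ[k] (lAct Cδ s h m)) := by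
  rw [Submodule.Quotient.eq]
  exact Submodule.subset_span ⟨h, c, m, rfl⟩

theorem toRatFun_mem (s : ComodStr Cδ Cε M) (D : Module.Dual k (Nak Cδ Cε s)) :
    toRatFun s D ∈ RatHom Cδ Cε s := by
  have h1 : ∀ (h : C →ₗ[k] k) (m : M),
      toRatFun s D (lAct Cδ s h m) = conv Cδ h (toRatFun s D m) := by
    intro h m
    apply LinearMap.ext
    intro c
    rw [toRatFun_apply, ← mk_rel, conv_apply_rAct, toRatFun_apply]
  exact ⟨h1, auto_rat s _ h1⟩

/-- The functional on `N_C M` attached to an element of `Hom^C(M, C*^rat)`. -/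
noncomputable def fromRat (s : ComodStr Cδ Cε M) (α : RatHom Cδ Cε s) :
    Module.Dual k (Nak Cδ Cε s) :=
  Submodule.liftQ _ (TensorProduct.lift ((↑α : M →ₗ[k] (C →ₗ[k] k)).flip)) (by
    rw [relators, Submodule.span_le]
    rintro _ ⟨h, c, m, rfl⟩
    simp only [SetLike.mem_coe, LinearMap.mem_ker, map_sub]
    rw [TensorProduct.lift.tmul, TensorProduct.lift.tmul, LinearMap.flip_apply,
      LinearMap.flip_apply, α.2.1 h m, ← conv_apply_rAct, sub_self])

theorem fromRat_mk (s : ComodStr Cδ Cε M) (α : RatHom Cδ Cε s) (c : C) (m : M) :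
    fromRat s α (Submodule.Quotient.mk (c ⊗ₜ[k] m)) = (↑α : M →ₗ[k] (C →ₗ[k] k)) m c := by
  rw [fromRat]
  erw [Submodule.liftQ_apply]

/-- The duality between `(N_C M)*` and `Hom^C(M, C*^rat)`. -/
noncomputable def dualEquiv (s : ComodStr Cδ Cε M) :
    Module.Dual k (Nak Cδ Cε s) ≃ₗ[k] (RatHom Cδ Cε s) where
  toFun D := ⟨toRatFun s D, toRatFun_mem s D⟩
  map_add' D D' := by
    apply Subtype.ext
    apply LinearMap.ext; intro m; apply LinearMap.ext; intro c
    simp [toRatFun_apply]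
    rfl
  map_smul' a D := by
    apply Subtype.ext
    apply LinearMap.ext; intro m; apply LinearMap.ext; intro c
    simp [toRatFun_apply]
    rfl
  invFun α := fromRat s α
  left_inv D := by
    apply Submodule.linearMap_qext
    apply TensorProduct.ext'
    intro c m
    simp only [LinearMap.comp_apply, Submodule.mkQ_apply]
    exact fromRat_mk s ⟨toRatFun s D, toRatFun_mem s D⟩ c m
  right_inv α := by
    apply Subtype.ext
    apply LinearMap.ext; intro m; apply LinearMap.ext; intro c
    show toRatFun s (fromRat s α) m c = (↑α : M →ₗ[k] (C →ₗ[k] k)) m c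
    rw [toRatFun_apply, fromRat_mk]

theorem nakzero_of_ratzero (H : RatPartZero Cδ) : NakayamaZero Cδ Cε := by
  intro M _ _ s x
  rw [← Module.forall_dual_apply_eq_zero_iff k x]
  intro D
  have hD : dualEquiv s D = 0 := by
    apply Subtype.ext
    apply LinearMap.ext
    intro m
    have := H _ ((dualEquiv s D).2.2 m)
    simpa using this
  have hD0 : D = 0 := by
    have h2 := (dualEquiv s).symm_apply_apply D
    rw [hD] at h2
    rw [← h2]
    exact LinearEquiv.map_zero _
  rw [hD0]
  rfl

/-- Restriction of comodule homs into the rational part. -/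
noncomputable def resHom (s : ComodStr Cδ Cε M) (t : ComodStr Cδ Cε N)
    (φ : M →ₗ[k] N) (hφ : IsComodHom Cδ Cε s t φ) :
    (RatHom Cδ Cε t) →ₗ[k] (RatHom Cδ Cε s) where
  toFun α := ⟨(↑α : N →ₗ[k] (C →ₗ[k] k)) ∘ₗ φ, by
    have h1 : ∀ (h : C →ₗ[k] k) (m : M),
        ((↑α : N →ₗ[k] (C →ₗ[k] k)) ∘ₗ φ) (lAct Cδ s h m) =
          conv Cδ h (((↑α : N →ₗ[k] (C →ₗ[k] k)) ∘ₗ φ) m) := by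
      intro h m
      simp only [LinearMap.comp_apply]
      rw [equivariant_of_isComodHom Cδ Cε hφ h m, α.2.1]
    exact ⟨h1, fun m => α.2.2 (φ m)⟩⟩
  map_add' α β := Subtype.ext (by simp [LinearMap.add_comp])
  map_smul' a α := Subtype.ext (by simp [LinearMap.smul_comp])

theorem dualEquiv_nat (s : ComodStr Cδ Cε M) (t : ComodStr Cδ Cε N)
    (φ : M →ₗ[k] N) (hφ : IsComodHom Cδ Cε s t φ) (D : Module.Dual k (Nak Cδ Cε t)) :
    dualEquiv s ((nakMap Cδ Cε φ hφ).dualMap D) = resHom s t φ hφ (dualEquiv t D) := by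
  apply Subtype.ext
  apply LinearMap.ext; intro m; apply LinearMap.ext; intro c
  show toRatFun s ((nakMap Cδ Cε φ hφ).dualMap D) m c = toRatFun t D (φ m) c
  rw [toRatFun_apply, toRatFun_apply]
  erw [LinearMap.dualMap_apply]

end NakDual

section Transfer

theorem exact_dual_iff {V₁ V₂ V₃ : Type u} [AddCommGroup V₁] [Module k V₁]
    [AddCommGroup V₂] [Module k V₂] [AddCommGroup V₃] [Module k V₃]
    (u : V₁ →ₗ[k] V₂) (v : V₂ →ₗ[k] V₃) :
    Function.Exact u v ↔ Function.Exact v.dualMap u.dualMap := by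
  rw [LinearMap.exact_iff, LinearMap.exact_iff,
    LinearMap.ker_dualMap_eq_dualAnnihilator_range,
    LinearMap.range_dualMap_eq_dualAnnihilator_ker]
  constructor
  · intro h
    rw [h]
  · intro h
    have h2 := congrArg Submodule.dualCoannihilator h
    rw [Subspace.dualAnnihilator_dualCoannihilator_eq,
      Subspace.dualAnnihilator_dualCoannihilator_eq] at h2
    exact h2.symm

end Transfer

section Main

variable {C : Type u} [AddCommGroup C] [Module k C] [Coalgebra k C]

local notation "Cδ" => (CoalgebraStruct.comul : C →ₗ[k] C ⊗[k] C)
local notation "Cε" => (CoalgebraStruct.counit : C →ₗ[k] k)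

variable {M N : Type u} [AddCommGroup M] [Module k M] [AddCommGroup N] [Module k N]

theorem inj_iff (s : ComodStr Cδ Cε M) (t : ComodStr Cδ Cε N)
    (φ : M →ₗ[k] N) (hφ : IsComodHom Cδ Cε s t φ) :
    Function.Injective (nakMap Cδ Cε φ hφ) ↔ Function.Surjective (resHom s t φ hφ) := by
  rw [← LinearMap.dualMap_surjective_iff]
  constructor
  · intro h β
    obtain ⟨D, hD⟩ := h ((dualEquiv s).symm β)
    refine ⟨dualEquiv t D, ?_⟩
    rw [← dualEquiv_nat, hD, LinearEquiv.apply_symm_apply]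
  · intro h ξ
    obtain ⟨α, hα⟩ := h (dualEquiv s ξ)
    refine ⟨(dualEquiv t).symm α, ?_⟩
    apply (dualEquiv s).injective
    rw [dualEquiv_nat, LinearEquiv.apply_symm_apply, hα]

theorem surj_iff (s : ComodStr Cδ Cε M) (t : ComodStr Cδ Cε N)
    (ψ : M →ₗ[k] N) (hψ : IsComodHom Cδ Cε s t ψ) :
    Function.Surjective (nakMap Cδ Cε ψ hψ) ↔ Function.Injective (resHom s t ψ hψ) := by
  rw [← LinearMap.dualMap_injective_iff]
  constructor
  · intro h a b hab
    have h1 : (nakMap Cδ Cε ψ hψ).dualMap ((dualEquiv t).symm a) =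
        (nakMap Cδ Cε ψ hψ).dualMap ((dualEquiv t).symm b) := by
      apply (dualEquiv s).injective
      rw [dualEquiv_nat, dualEquiv_nat, LinearEquiv.apply_symm_apply,
        LinearEquiv.apply_symm_apply, hab]
    have h2 := h h1
    exact (dualEquiv t).symm.injective h2
  · intro h D D' hDD
    apply (dualEquiv t).injective
    apply h
    rw [← dualEquiv_nat, ← dualEquiv_nat, hDD]

theorem exact_res_iff {M₁ M₂ M₃ : Type u} [AddCommGroup M₁] [Module k M₁]
    [AddCommGroup M₂] [Module k M₂] [AddCommGroup M₃] [Module k M₃]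
    (s₁ : ComodStr Cδ Cε M₁) (s₂ : ComodStr Cδ Cε M₂) (s₃ : ComodStr Cδ Cε M₃)
    (φ : M₁ →ₗ[k] M₂) (ψ : M₂ →ₗ[k] M₃)
    (hφ : IsComodHom Cδ Cε s₁ s₂ φ) (hψ : IsComodHom Cδ Cε s₂ s₃ ψ) :
    Function.Exact (nakMap Cδ Cε φ hφ) (nakMap Cδ Cε ψ hψ) ↔
      Function.Exact (resHom s₂ s₃ ψ hψ) (resHom s₁ s₂ φ hφ) := by
  rw [exact_dual_iff]
  refine (Function.Exact.iff_of_ladder_linearEquiv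
    (e₁ := dualEquiv s₃) (e₂ := dualEquiv s₂) (e₃ := dualEquiv s₁)
    (f₁₂ := (nakMap Cδ Cε ψ hψ).dualMap) (f₂₃ := (nakMap Cδ Cε φ hφ).dualMap)
    ?_ ?_).symm
  · apply LinearMap.ext
    intro D
    simp only [LinearMap.comp_apply, LinearEquiv.coe_coe]
    exact (dualEquiv_nat s₂ s₃ ψ hψ D).symm
  · apply LinearMap.ext
    intro D
    simp only [LinearMap.comp_apply, LinearEquiv.coe_coe]
    exact (dualEquiv_nat s₁ s₂ φ hφ D).symm

/-- The quotient coaction. -/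
noncomputable def rhoQ (t : ComodStr Cδ Cε N) (P : Submodule k N)
    (hP : ∀ y ∈ P, (LinearMap.rTensor C P.mkQ) (t.ρ y) = 0) :
    (N ⧸ P) →ₗ[k] (N ⧸ P) ⊗[k] C :=
  Submodule.liftQ P ((LinearMap.rTensor C P.mkQ) ∘ₗ t.ρ) (fun y hy => by
    rw [LinearMap.mem_ker, LinearMap.comp_apply]
    exact hP y hy)

theorem rhoQ_mk (t : ComodStr Cδ Cε N) (P : Submodule k N)
    (hP : ∀ y ∈ P, (LinearMap.rTensor C P.mkQ) (t.ρ y) = 0) (y : N) :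
    rhoQ t P hP (Submodule.Quotient.mk y) = LinearMap.rTensor C P.mkQ (t.ρ y) := rfl

/-- Quotient comodule structure. -/
noncomputable def quotStr (t : ComodStr Cδ Cε N) (P : Submodule k N)
    (hP : ∀ y ∈ P, (LinearMap.rTensor C P.mkQ) (t.ρ y) = 0) :
    ComodStr Cδ Cε (N ⧸ P) where
  ρ := rhoQ t P hP
  coassoc := by
    apply Submodule.linearMap_qext
    apply LinearMap.ext
    intro y
    simp only [LinearMap.comp_apply, Submodule.mkQ_apply, LinearEquiv.coe_coe]
    rw [rhoQ_mk]
    have sqq1 : (TensorProduct.map (rhoQ t P hP) (LinearMap.id (M := C))) ∘ₗ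
        (LinearMap.rTensor C P.mkQ) =
        (LinearMap.rTensor C (LinearMap.rTensor C P.mkQ)) ∘ₗ
          (TensorProduct.map t.ρ LinearMap.id) := by
      apply TensorProduct.ext'
      intro y' c
      simp only [LinearMap.comp_apply, TensorProduct.map_tmul, LinearMap.rTensor_tmul,
        LinearMap.id_apply, Submodule.mkQ_apply]
      rw [rhoQ_mk]
    have sqq2 : (TensorProduct.assoc k (N ⧸ P) C C).toLinearMap ∘ₗ
        (LinearMap.rTensor C (LinearMap.rTensor C P.mkQ)) =
        (LinearMap.rTensor (C ⊗[k] C) P.mkQ) ∘ₗ (TensorProduct.assoc k N C C).toLinearMap := by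
      apply TensorProduct.ext_threefold
      intro a c c'
      simp [LinearMap.rTensor_tmul]
    have sqq3 : (LinearMap.rTensor (C ⊗[k] C) P.mkQ) ∘ₗ (TensorProduct.map LinearMap.id Cδ) =
        (TensorProduct.map LinearMap.id Cδ) ∘ₗ (LinearMap.rTensor C P.mkQ) := by
      apply TensorProduct.ext'
      intro y' c
      simp [LinearMap.rTensor_tmul]
    have e1 := LinearMap.congr_fun sqq1 (t.ρ y)
    have e2 := LinearMap.congr_fun sqq2 (TensorProduct.map t.ρ LinearMap.id (t.ρ y))
    have e3 := LinearMap.congr_fun sqq3 (t.ρ y)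
    simp only [LinearMap.comp_apply, LinearEquiv.coe_coe] at e1 e2 e3
    have hco := LinearMap.congr_fun t.coassoc y
    simp only [LinearMap.comp_apply, LinearEquiv.coe_coe] at hco
    rw [e1, e2, hco]
    exact e3
  counit := by
    apply Submodule.linearMap_qext
    apply LinearMap.ext
    intro y
    simp only [LinearMap.comp_apply, Submodule.mkQ_apply, LinearEquiv.coe_coe,
      LinearMap.id_apply]
    rw [rhoQ_mk]
    show ctr Cε (LinearMap.rTensor C P.mkQ (t.ρ y)) = Submodule.Quotient.mk y
    rw [ctr_natural_apply]
    have hc := LinearMap.congr_fun t.counit y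
    simp only [LinearMap.comp_apply, LinearEquiv.coe_coe, LinearMap.id_apply] at hc
    show P.mkQ (ctr Cε (t.ρ y)) = Submodule.Quotient.mk y
    rw [show ctr Cε (t.ρ y) = y from hc]
    rw [Submodule.mkQ_apply]

theorem quot_hom (t : ComodStr Cδ Cε N) (P : Submodule k N)
    (hP : ∀ y ∈ P, (LinearMap.rTensor C P.mkQ) (t.ρ y) = 0) :
    IsComodHom Cδ Cε t (quotStr t P hP) P.mkQ := by
  show TensorProduct.map P.mkQ LinearMap.id ∘ₗ t.ρ = (quotStr t P hP).ρ ∘ₗ P.mkQ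
  apply LinearMap.ext
  intro y
  simp only [LinearMap.comp_apply, Submodule.mkQ_apply]
  show TensorProduct.map P.mkQ LinearMap.id (t.ρ y) = rhoQ t P hP (Submodule.Quotient.mk y)
  rw [rhoQ_mk]
  rfl

theorem ratinj_of_nakexact (H : NakayamaExact Cδ Cε) : RatPartInjective Cδ Cε := by
  intro X Y _ _ _ _ sX sY i hi hinj α hα1 hα2
  have hP : ∀ y ∈ LinearMap.range i, (LinearMap.rTensor C (LinearMap.range i).mkQ)
      (sY.ρ y) = 0 := by
    rintro _ ⟨x, rfl⟩
    have h1 := LinearMap.congr_fun hi x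
    simp only [LinearMap.comp_apply] at h1
    rw [← h1]
    have h2 : (LinearMap.rTensor C (LinearMap.range i).mkQ) ∘ₗ
        (TensorProduct.map i (LinearMap.id (M := C))) = 0 := by
      apply TensorProduct.ext'
      intro x' c
      simp only [LinearMap.comp_apply, TensorProduct.map_tmul, LinearMap.rTensor_tmul,
        LinearMap.id_apply, LinearMap.zero_apply, Submodule.mkQ_apply]
      rw [show (Submodule.Quotient.mk (i x') : Y ⧸ LinearMap.range i) = 0 from
        (Submodule.Quotient.mk_eq_zero _).mpr (LinearMap.mem_range_self i x')]
      rw [TensorProduct.zero_tmul]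
    exact LinearMap.congr_fun h2 (sX.ρ x)
  have hexact : Function.Exact i (LinearMap.range i).mkQ := by
    rw [LinearMap.exact_iff]
    exact Submodule.ker_mkQ _
  obtain ⟨hNinj, -, -⟩ := H X Y (Y ⧸ LinearMap.range i) sX sY
    (quotStr sY (LinearMap.range i) hP) i (LinearMap.range i).mkQ hi
    (quot_hom sY (LinearMap.range i) hP) hinj (Submodule.mkQ_surjective _) hexact
  obtain ⟨β, hβ⟩ := (inj_iff sX sY i hi).mp hNinj ⟨α, hα1, hα2⟩
  exact ⟨↑β, β.2.1, β.2.2, congrArg Subtype.val hβ⟩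

theorem nakexact_of_ratinj (H : RatPartInjective Cδ Cε) : NakayamaExact Cδ Cε := by
  intro M₁ M₂ M₃ _ _ _ _ _ _ s₁ s₂ s₃ φ ψ hφ hψ hinj hsurj hex
  refine ⟨(inj_iff s₁ s₂ φ hφ).mpr ?_, (surj_iff s₂ s₃ ψ hψ).mpr ?_,
    (exact_res_iff s₁ s₂ s₃ φ ψ hφ hψ).mpr ?_⟩
  · intro α
    obtain ⟨β, hb1, hb2, hb3⟩ := H M₁ M₂ s₁ s₂ φ hφ hinj ↑α α.2.1 α.2.2
    exact ⟨⟨β, hb1, hb2⟩, Subtype.ext hb3⟩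
  · intro a b hab
    have h2 := congrArg Subtype.val hab
    apply Subtype.ext
    apply LinearMap.ext
    intro m₃
    obtain ⟨m₂, rfl⟩ := hsurj m₃
    exact LinearMap.congr_fun h2 m₂
  · intro α₂
    constructor
    · intro h0
      have hc : (↑α₂ : M₂ →ₗ[k] (C →ₗ[k] k)) ∘ₗ φ = 0 := congrArg Subtype.val h0
      obtain ⟨σ, hσ⟩ := ψ.exists_rightInverse_of_surjective (LinearMap.range_eq_top.mpr hsurj)
      have hγψ : ∀ m₂ : M₂, ((↑α₂ : M₂ →ₗ[k] (C →ₗ[k] k)) ∘ₗ σ) (ψ m₂) =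
          (↑α₂ : M₂ →ₗ[k] (C →ₗ[k] k)) m₂ := by
        intro m₂
        have hker : ψ (σ (ψ m₂) - m₂) = 0 := by
          rw [map_sub, show ψ (σ (ψ m₂)) = ψ m₂ from LinearMap.congr_fun hσ (ψ m₂)]
          exact sub_self _
        obtain ⟨x₁, hx₁⟩ := (hex _).mp hker
        have h4 := LinearMap.congr_fun hc x₁
        simp only [LinearMap.comp_apply, LinearMap.zero_apply] at h4
        rw [hx₁, map_sub] at h4
        have h5 := sub_eq_zero.mp h4
        simpa [LinearMap.comp_apply] using h5
      have hmem1 : ∀ (h : C →ₗ[k] k) (m₃ : M₃),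
          ((↑α₂ : M₂ →ₗ[k] (C →ₗ[k] k)) ∘ₗ σ) (lAct Cδ s₃ h m₃) =
            conv Cδ h (((↑α₂ : M₂ →ₗ[k] (C →ₗ[k] k)) ∘ₗ σ) m₃) := by
        intro h m₃
        obtain ⟨m₂, rfl⟩ := hsurj m₃
        rw [← equivariant_of_isComodHom Cδ Cε hψ h m₂, hγψ, hγψ, α₂.2.1]
      refine ⟨⟨(↑α₂ : M₂ →ₗ[k] (C →ₗ[k] k)) ∘ₗ σ, hmem1, auto_rat s₃ _ hmem1⟩, ?_⟩
      apply Subtype.ext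
      apply LinearMap.ext
      intro m₂
      exact hγψ m₂
    · rintro ⟨α₃, rfl⟩
      apply Subtype.ext
      apply LinearMap.ext
      intro m₁
      show (↑α₃ : M₃ →ₗ[k] (C →ₗ[k] k)) (ψ (φ m₁)) = 0
      rw [hex.apply_apply_eq_zero m₁, map_zero]

theorem ratqf_of_nakfd (H : NakayamaPreservesFd Cδ Cε) : RatPartQuasiFinite Cδ Cε := by
  intro X _ _ hfd sX
  have h1 : FiniteDimensional k (Nak Cδ Cε sX) := H X sX hfd
  haveI : Module.Finite k (Module.Dual k (Nak Cδ Cε sX)) := (Module.finite_dual_iff k).mpr h1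
  exact Module.Finite.equiv (dualEquiv sX)

theorem nakfd_of_ratqf (H : RatPartQuasiFinite Cδ Cε) : NakayamaPreservesFd Cδ Cε := by
  intro M _ _ s hfd
  haveI := H M hfd s
  haveI h2 : FiniteDimensional k (Module.Dual k (Nak Cδ Cε s)) :=
    Module.Finite.equiv (dualEquiv s).symm
  exact (Module.finite_dual_iff k).mp h2

end Main






/-- Lemma `Nakayama-and-rat-dual`. -/
theorem nakayama_rat_dual
    (C : Type u) [AddCommGroup C] [Module k C] [Coalgebra k C] :
    (NakayamaZero (Coalgebra.comul (R := k) (A := C)) Coalgebra.counit ↔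
      RatPartZero (Coalgebra.comul (R := k) (A := C))) ∧
    (NakayamaExact (Coalgebra.comul (R := k) (A := C)) Coalgebra.counit ↔
      RatPartInjective (Coalgebra.comul (R := k) (A := C)) Coalgebra.counit) ∧
    (NakayamaPreservesFd (Coalgebra.comul (R := k) (A := C)) Coalgebra.counit ↔
      RatPartQuasiFinite (Coalgebra.comul (R := k) (A := C)) Coalgebra.counit) :=
  ⟨⟨ratzero_of_nakzero, nakzero_of_ratzero⟩,
    ⟨ratinj_of_nakexact, nakexact_of_ratinj⟩,
    ⟨ratqf_of_nakfd, nakfd_of_ratqf⟩⟩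

end Stmt1
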